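/- arXiv:2109.14618 — 3 statements merged into one kernel-verified Lean document; each statement's English description precedes it below -/
import Mathlib

section
/- Let η(x) = -x log x. If 0 ≤ r, s ≤ 1 and |r - s| ≤ 1/2, then |η(r) - η(s)| ≤ η(|r - s|). -/
/-- `η x = -x * log x` (note `Real.log 0 = 0`, so `η 0 = 0`). -/
noncomputable def eta (x : ℝ) : ℝ := -x * Real.log x

lemma eta_eq_negMulLog : eta = Real.negMulLog := rfl

lemma eta_one : eta 1 = 0 := by simp [eta]

/-- Subadditivity of η on nonnegative reals. -/
lemma eta_add_le {a b : ℝ} (ha : 0 ≤ a) (hb : 0 ≤ b) :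
    eta (a + b) ≤ eta a + eta b := by
  have h1 : -a * Real.log (a + b) ≤ -a * Real.log a := by
    rcases ha.eq_or_lt with h | h
    · simp [← h]
    · have : Real.log a ≤ Real.log (a + b) := Real.log_le_log h (by linarith)
      nlinarith
  have h2 : -b * Real.log (a + b) ≤ -b * Real.log b := by
    rcases hb.eq_or_lt with h | h
    · simp [← h]
    · have : Real.log b ≤ Real.log (a + b) := Real.log_le_log h (by linarith)
      nlinarith
  have : eta (a + b) = -a * Real.log (a + b) + -b * Real.log (a + b) := by
    unfold eta; ring
  rw [this]
  unfold eta
  linarith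

/-- Shift monotonicity: `η s - η (s + t) ≤ η (1 - t)`. -/
lemma eta_sub_eta_add_le {s t : ℝ} (hs : 0 ≤ s) (ht : 0 ≤ t) (h1 : s + t ≤ 1) :
    eta s - eta (s + t) ≤ eta (1 - t) := by
  set φ : ℝ → ℝ := fun x => eta x - eta (x + t) with hφ
  have hcont : ContinuousOn φ (Set.Icc 0 (1 - t)) := by
    apply Continuous.continuousOn
    simp only [hφ, eta_eq_negMulLog]
    exact Real.continuous_negMulLog.sub (Real.continuous_negMulLog.comp (by continuity))
  have hmono : MonotoneOn φ (Set.Icc 0 (1 - t)) := by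
    apply monotoneOn_of_deriv_nonneg (convex_Icc 0 (1 - t)) hcont
    · intro x hx
      rw [interior_Icc] at hx
      have hx0 : (0 : ℝ) < x := hx.1
      have hxt : (0 : ℝ) < x + t := by linarith
      have hd1 : HasDerivAt eta (-Real.log x - 1) x := by
        rw [eta_eq_negMulLog]; exact Real.hasDerivAt_negMulLog hx0.ne'
      have hd2 : HasDerivAt (fun x => eta (x + t)) (-Real.log (x + t) - 1) x := by
        rw [eta_eq_negMulLog]
        have := (Real.hasDerivAt_negMulLog hxt.ne').comp x ((hasDerivAt_id x).add_const t)
        simpa [Function.comp_def] using this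
      exact (hd1.sub hd2).differentiableAt.differentiableWithinAt
    · intro x hx
      rw [interior_Icc] at hx
      have hx0 : (0 : ℝ) < x := hx.1
      have hxt : (0 : ℝ) < x + t := by linarith
      have hd1 : HasDerivAt eta (-Real.log x - 1) x := by
        rw [eta_eq_negMulLog]; exact Real.hasDerivAt_negMulLog hx0.ne'
      have hd2 : HasDerivAt (fun x => eta (x + t)) (-Real.log (x + t) - 1) x := by
        rw [eta_eq_negMulLog]
        have := (Real.hasDerivAt_negMulLog hxt.ne').comp x ((hasDerivAt_id x).add_const t)
        simpa [Function.comp_def] using this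
      have hderiv : deriv φ x = (-Real.log x - 1) - (-Real.log (x + t) - 1) :=
        (hd1.sub hd2).deriv
      rw [hderiv]
      have : Real.log x ≤ Real.log (x + t) := Real.log_le_log hx0 (by linarith)
      linarith
  have hmem1 : s ∈ Set.Icc 0 (1 - t) := ⟨hs, by linarith⟩
  have hmem2 : (1 - t) ∈ Set.Icc 0 (1 - t) := ⟨by linarith, le_refl _⟩
  have := hmono hmem1 hmem2 (by linarith)
  have heval : φ (1 - t) = eta (1 - t) := by
    simp [hφ, eta_one]
  have heval2 : φ s = eta s - eta (s + t) := rfl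
  rw [heval, heval2] at this
  exact this

/-- For `t ∈ [0, 1/2]`, `η (1 - t) ≤ η t`. -/
lemma eta_one_sub_le {t : ℝ} (ht0 : 0 ≤ t) (ht : t ≤ 1 / 2) :
    eta (1 - t) ≤ eta t := by
  rcases le_or_gt t (Real.exp (-1)) with hcase | hcase
  · -- small t : η(1-t) ≤ t ≤ η t
    rcases ht0.eq_or_lt with h0 | h0
    · simp [← h0, eta_one, eta]
    have ht1 : t < 1 := by linarith
    have h1t : (0 : ℝ) < 1 - t := by linarith
    have hlog : Real.log (1 - t)⁻¹ ≤ (1 - t)⁻¹ - 1 :=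
      Real.log_le_sub_one_of_pos (by positivity)
    have hloginv : Real.log (1 - t)⁻¹ = -Real.log (1 - t) := Real.log_inv _
    have hfrac : (1 - t)⁻¹ - 1 = t / (1 - t) := by field_simp; ring
    have h2 : -(1 - t) * Real.log (1 - t) ≤ t := by
      have : -Real.log (1 - t) ≤ t / (1 - t) := by
        rw [← hloginv, ← hfrac]; exact hlog
      have := mul_le_mul_of_nonneg_left this h1t.le
      calc -(1 - t) * Real.log (1 - t) = (1 - t) * (-Real.log (1 - t)) := by ring
        _ ≤ (1 - t) * (t / (1 - t)) := this
        _ = t := by field_simp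
    have h3 : t ≤ -t * Real.log t := by
      have hlt : Real.log t ≤ -1 := by
        calc Real.log t ≤ Real.log (Real.exp (-1)) := Real.log_le_log h0 hcase
          _ = -1 := Real.log_exp _
      nlinarith
    unfold eta
    linarith
  · -- large t : g(t) = η t - η (1-t) is antitone on [exp(-1), 1/2], g(1/2) = 0
    set g : ℝ → ℝ := fun x => eta x - eta (1 - x) with hg
    have hcont : ContinuousOn g (Set.Icc (Real.exp (-1)) (1 / 2)) := by
      apply Continuous.continuousOn
      simp only [hg, eta_eq_negMulLog]
      exact Real.continuous_negMulLog.sub (Real.continuous_negMulLog.comp (by continuity))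
    have hanti : AntitoneOn g (Set.Icc (Real.exp (-1)) (1 / 2)) := by
      apply antitoneOn_of_deriv_nonpos (convex_Icc _ _) hcont
      · intro x hx
        rw [interior_Icc] at hx
        have hx0 : (0 : ℝ) < x := lt_trans (Real.exp_pos _) hx.1
        have hx1 : (0 : ℝ) < 1 - x := by
          have := hx.2; linarith
        have hd1 : HasDerivAt eta (-Real.log x - 1) x := by
          rw [eta_eq_negMulLog]; exact Real.hasDerivAt_negMulLog hx0.ne'
        have hd2 : HasDerivAt (fun x => eta (1 - x)) (-(-Real.log (1 - x) - 1)) x := by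
          rw [eta_eq_negMulLog]
          have := (Real.hasDerivAt_negMulLog hx1.ne').comp x
            ((hasDerivAt_id x).const_sub 1)
          simpa [Function.comp_def] using this
        exact (hd1.sub hd2).differentiableAt.differentiableWithinAt
      · intro x hx
        rw [interior_Icc] at hx
        have hx0 : (0 : ℝ) < x := lt_trans (Real.exp_pos _) hx.1
        have hx2 : x < 1 / 2 := hx.2
        have hx1 : (0 : ℝ) < 1 - x := by linarith
        have hd1 : HasDerivAt eta (-Real.log x - 1) x := by
          rw [eta_eq_negMulLog]; exact Real.hasDerivAt_negMulLog hx0.ne'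
        have hd2 : HasDerivAt (fun x => eta (1 - x)) (-(-Real.log (1 - x) - 1)) x := by
          rw [eta_eq_negMulLog]
          have := (Real.hasDerivAt_negMulLog hx1.ne').comp x
            ((hasDerivAt_id x).const_sub 1)
          simpa [Function.comp_def] using this
        have hderiv : deriv g x = (-Real.log x - 1) - (-(-Real.log (1 - x) - 1)) :=
          (hd1.sub hd2).deriv
        rw [hderiv]
        -- need : log x + log (1 - x) ≥ -2, i.e. x (1 - x) ≥ exp (-2)
        have hprod : Real.exp (-2) ≤ x * (1 - x) := by
          have he2 : (2 : ℝ) ≤ Real.exp 1 := by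
            have := Real.add_one_le_exp (1 : ℝ); linarith
          have h1 : Real.exp (-1) * Real.exp (-1) ≤ x * (1 - x) := by
            have hla : Real.exp (-1) ≤ x := hx.1.le
            have hlb : Real.exp (-1) ≤ 1 - x := by
              have : Real.exp (-1) ≤ 1 / 2 := by
                rw [Real.exp_neg]
                rw [inv_le_comm₀ (Real.exp_pos _) (by norm_num)]
                simpa using he2
              linarith
            have := mul_le_mul hla hlb (Real.exp_pos _).le hx0.le
            linarith [this]
          calc Real.exp (-2) = Real.exp (-1) * Real.exp (-1) := by
                rw [← Real.exp_add]; norm_num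
            _ ≤ x * (1 - x) := h1
        have hlog2 : (-2 : ℝ) ≤ Real.log (x * (1 - x)) := by
          calc (-2 : ℝ) = Real.log (Real.exp (-2)) := (Real.log_exp _).symm
            _ ≤ Real.log (x * (1 - x)) := Real.log_le_log (Real.exp_pos _) hprod
        rw [Real.log_mul hx0.ne' hx1.ne'] at hlog2
        linarith
    have hmem1 : t ∈ Set.Icc (Real.exp (-1)) (1 / 2) := ⟨hcase.le, ht⟩
    have hmem2 : (1 / 2 : ℝ) ∈ Set.Icc (Real.exp (-1)) (1 / 2) := by
      constructor
      · have he2 : (2 : ℝ) ≤ Real.exp 1 := by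
          have := Real.add_one_le_exp (1 : ℝ); linarith
        rw [Real.exp_neg, inv_le_comm₀ (Real.exp_pos _) (by norm_num)]
        simpa using he2
      · exact le_rfl
    have := hanti hmem1 hmem2 ht
    have hg2 : g (1 / 2) = 0 := by
      simp only [hg]
      norm_num
    rw [hg2] at this
    have : (0 : ℝ) ≤ eta t - eta (1 - t) := this
    linarith

lemma aux_main {r s : ℝ} (hs0 : 0 ≤ s) (hsr : s ≤ r) (hr1 : r ≤ 1)
    (h : r - s ≤ 1 / 2) : |eta r - eta s| ≤ eta (r - s) := by
  have hts : 0 ≤ r - s := by linarith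
  rw [abs_le]
  constructor
  · -- eta s - eta r ≤ eta (1 - (r - s)) ≤ eta (r - s)
    have h1 : eta s - eta (s + (r - s)) ≤ eta (1 - (r - s)) :=
      eta_sub_eta_add_le hs0 hts (by linarith)
    have h2 : eta (1 - (r - s)) ≤ eta (r - s) := eta_one_sub_le hts h
    have : s + (r - s) = r := by ring
    rw [this] at h1
    linarith
  · have h1 : eta (s + (r - s)) ≤ eta s + eta (r - s) := eta_add_le hs0 hts
    have : s + (r - s) = r := by ring
    rw [this] at h1
    linarith

/-- If `0 ≤ r, s ≤ 1` and `|r - s| ≤ 1/2`, then `|η r - η s| ≤ η |r - s|`. -/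
theorem abs_eta_sub_eta_le (r s : ℝ) (hr0 : 0 ≤ r) (hr1 : r ≤ 1)
    (hs0 : 0 ≤ s) (hs1 : s ≤ 1) (h : |r - s| ≤ 1 / 2) :
    |eta r - eta s| ≤ eta |r - s| := by
  rcases le_total s r with hle | hle
  · rw [abs_of_nonneg (by linarith : (0:ℝ) ≤ r - s)] at h ⊢
    exact aux_main hs0 hle hr1 h
  · rw [abs_sub_comm r s] at h ⊢
    rw [abs_of_nonneg (by linarith : (0:ℝ) ≤ s - r)] at h ⊢
    rw [abs_sub_comm]
    exact aux_main hr0 hle hs1 h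
end

section
/- For positive semidefinite operators P₀ and P₁ on a finite-dimensional Hilbert space, the trace norm of their difference dominates the squared Hilbert–Schmidt norm of the difference of their square roots: ‖P₀ - P₁‖₁ ≥ ‖√P₀ - √P₁‖₂². -/
open Matrix ComplexOrder

/-- The positive semidefinite square root of a positive semidefinite matrix, as defined in the
older Mathlib (`Matrix.PosSemidef.sqrt`, since removed). -/
noncomputable def Matrix.PosSemidef.sqrt {n 𝕜 : Type*} [Fintype n] [RCLike 𝕜] [DecidableEq n]
    {A : Matrix n n 𝕜} (hA : A.PosSemidef) : Matrix n n 𝕜 :=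
  hA.1.eigenvectorUnitary.1 * diagonal ((↑) ∘ (√·) ∘ hA.1.eigenvalues) *
  (star hA.1.eigenvectorUnitary : Matrix n n 𝕜)

namespace Matrix.PosSemidef

open scoped MatrixOrder

lemma sqrt_eq_cfcSqrt {n : Type*} [Fintype n] [DecidableEq n] {A : Matrix n n ℂ}
    (hA : A.PosSemidef) : hA.sqrt = CFC.sqrt A := by
  rw [CFC.sqrt_eq_real_sqrt A hA.nonneg, cfcₙ_eq_cfc, hA.1.cfc_eq, IsHermitian.cfc, Unitary.conjStarAlgAut_apply]
  rfl

lemma posSemidef_sqrt {n : Type*} [Fintype n] [DecidableEq n] {A : Matrix n n ℂ}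
    (hA : A.PosSemidef) : hA.sqrt.PosSemidef := by
  rw [sqrt_eq_cfcSqrt]; exact (CFC.sqrt_nonneg A).posSemidef

lemma sqrt_mul_self {n : Type*} [Fintype n] [DecidableEq n] {A : Matrix n n ℂ}
    (hA : A.PosSemidef) : hA.sqrt * hA.sqrt = A := by
  rw [sqrt_eq_cfcSqrt]; exact CFC.sqrt_mul_sqrt_self A hA.nonneg

lemma eq_sqrt_of_sq_eq {n : Type*} [Fintype n] [DecidableEq n] {A : Matrix n n ℂ}
    (hA : A.PosSemidef) (B : Matrix n n ℂ) {hB : B.PosSemidef} (h : A ^ 2 = B) :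
    A = hB.sqrt := by
  rw [sqrt_eq_cfcSqrt]; exact (CFC.sqrt_unique (by rw [← h, sq]) hA.nonneg).symm

end Matrix.PosSemidef

lemma psd_diag_nonneg {n : Type*} [Fintype n] [DecidableEq n]
    {A : Matrix n n ℂ} (hA : A.PosSemidef) (i : n) : 0 ≤ A i i := by
  exact hA.diag_nonneg


/-- The Schatten 1-norm (trace norm) `‖X‖₁ = tr √(Xᴴ X)` of a complex matrix. -/
noncomputable def traceNorm {m n : Type*} [Fintype m] [Fintype n] [DecidableEq n]
    (X : Matrix m n ℂ) : ℝ :=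
  ((Matrix.posSemidef_conjTranspose_mul_self X).sqrt).trace.re

/-- For positive semidefinite matrices `P₀, P₁`,
`‖P₀ - P₁‖₁ ≥ ‖√P₀ - √P₁‖₂²` where `‖X‖₂² = tr (Xᴴ X)` is the squared Frobenius norm. -/
theorem traceNorm_sub_ge_sq_frobenius_sqrt {d : ℕ}
    (P₀ P₁ : Matrix (Fin d) (Fin d) ℂ) (h₀ : P₀.PosSemidef) (h₁ : P₁.PosSemidef) :
    (((h₀.sqrt - h₁.sqrt)ᴴ * (h₀.sqrt - h₁.sqrt)).trace).re ≤ traceNorm (P₀ - P₁) := by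

  classical
  set A := h₀.sqrt with hAdef
  set B := h₁.sqrt with hBdef
  have hApsd : A.PosSemidef := h₀.posSemidef_sqrt
  have hBpsd : B.PosSemidef := h₁.posSemidef_sqrt
  have hAA : A * A = P₀ := h₀.sqrt_mul_self
  have hBB : B * B = P₁ := h₁.sqrt_mul_self
  set M : Matrix (Fin d) (Fin d) ℂ := A - B with hMdef
  have hM : M.IsHermitian := hApsd.1.sub hBpsd.1
  set D : Matrix (Fin d) (Fin d) ℂ := P₀ - P₁ with hDdef
  have hD : D.IsHermitian := h₀.1.sub h₁.1
  set U : Matrix (Fin d) (Fin d) ℂ := (hM.eigenvectorUnitary : Matrix (Fin d) (Fin d) ℂ) with hUdef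
  have hU1 : U * star U = 1 := mem_unitaryGroup_iff.mp (hM.eigenvectorUnitary).2
  have hU2 : star U * U = 1 := mem_unitaryGroup_iff'.mp (hM.eigenvectorUnitary).2
  set lam : Fin d → ℝ := hM.eigenvalues with hlam
  set c : Matrix (Fin d) (Fin d) ℂ → Matrix (Fin d) (Fin d) ℂ := fun X => star U * X * U with hc
  have hcmul : ∀ X Y, c (X * Y) = c X * c Y := by
    intro X Y
    simp only [hc, Matrix.mul_assoc]
    rw [← Matrix.mul_assoc U (star U) _, hU1, Matrix.one_mul]
  have hcadd : ∀ X Y, c (X + Y) = c X + c Y := by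
    intro X Y; simp only [hc, Matrix.mul_add, Matrix.add_mul]
  have hcsub : ∀ X Y, c (X - Y) = c X - c Y := by
    intro X Y; simp only [hc, Matrix.mul_sub, Matrix.sub_mul]
  have hctr : ∀ X, (c X).trace = X.trace := by
    intro X
    simp only [hc]
    rw [Matrix.trace_mul_cycle, hU1, Matrix.one_mul]
  have hcPSD : ∀ {X : Matrix (Fin d) (Fin d) ℂ}, X.PosSemidef → (c X).PosSemidef := by
    intro X hX
    simpa [hc, Matrix.star_eq_conjTranspose] using hX.conjTranspose_mul_mul_same U
  have hMd : c M = diagonal (RCLike.ofReal ∘ lam) := by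
    have h := hM.conjStarAlgAut_star_eigenvectorUnitary
    rwa [Unitary.conjStarAlgAut_star_apply] at h
  -- LHS as sum of squared eigenvalues
  have hLHS : (Mᴴ * M).trace = ∑ i, ((lam i : ℂ) * lam i) := by
    rw [hM.eq, ← hctr (M * M), hcmul, hMd, diagonal_mul_diagonal, trace_diagonal]
    simp [Function.comp]
  -- key algebraic identity
  have hkey : M * (A + B) + (A + B) * M = D + D := by
    simp only [hMdef, hDdef, sub_mul, mul_sub, add_mul, mul_add, hAA, hBB]
    abel
  have hkey2 : c M * c (A + B) + c (A + B) * c M = c D + c D := by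
    rw [← hcmul, ← hcmul, ← hcadd, hkey, hcadd]
  -- spectral data of D and the absolute value matrix R
  set Q : Matrix (Fin d) (Fin d) ℂ := (hD.eigenvectorUnitary : Matrix (Fin d) (Fin d) ℂ) with hQdef
  have hQ2 : star Q * Q = 1 := mem_unitaryGroup_iff'.mp (hD.eigenvectorUnitary).2
  set mu : Fin d → ℝ := hD.eigenvalues with hmu
  have hDspec : D = Q * diagonal (RCLike.ofReal ∘ mu) * star Q := hD.spectral_theorem
  set R : Matrix (Fin d) (Fin d) ℂ :=
    Q * diagonal (fun i => ((|mu i| : ℝ) : ℂ)) * star Q with hRdef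
  have hcmul' : ∀ X Y : Matrix (Fin d) (Fin d) ℂ,
      (Q * X * star Q) * (Q * Y * star Q) = Q * (X * Y) * star Q := by
    intro X Y
    simp only [Matrix.mul_assoc]
    rw [← Matrix.mul_assoc (star Q) Q, hQ2, Matrix.one_mul]
  have hRpsd : R.PosSemidef := by
    have hdiag : (diagonal (fun i => ((|mu i| : ℝ) : ℂ))).PosSemidef :=
      PosSemidef.diagonal (fun i => Complex.zero_le_real.mpr (abs_nonneg _))
    simpa [hRdef, Matrix.star_eq_conjTranspose] using hdiag.mul_mul_conjTranspose_same Q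
  have hdd : (fun i => ((|mu i| : ℝ) : ℂ) * ((|mu i| : ℝ) : ℂ))
      = fun i => (RCLike.ofReal ∘ mu) i * (RCLike.ofReal ∘ mu) i := by
    funext i
    simp only [Function.comp_apply]
    rw [show (RCLike.ofReal (mu i) : ℂ) = ((mu i : ℝ) : ℂ) from rfl]
    norm_cast
    exact abs_mul_abs_self _
  have hRsq : R ^ 2 = Dᴴ * D := by
    rw [hD.eq, pow_two, hRdef, hcmul', hDspec, hcmul', diagonal_mul_diagonal,
      diagonal_mul_diagonal, hdd]
  have hT : (posSemidef_conjTranspose_mul_self D).sqrt = R :=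
    (hRpsd.eq_sqrt_of_sq_eq _ hRsq).symm
  -- R ± D are PSD
  have hTmD : (R - D).PosSemidef := by
    have hRD : R - D = Q * diagonal (fun i => ((|mu i| - mu i : ℝ) : ℂ)) * star Q := by
      rw [hRdef]
      conv_lhs => rw [hDspec]
      rw [← Matrix.sub_mul, ← Matrix.mul_sub, diagonal_sub]
      congr 2
      funext i
      push_cast
      rfl
    rw [hRD]
    have hdiag : (diagonal (fun i => ((|mu i| - mu i : ℝ) : ℂ))).PosSemidef :=
      PosSemidef.diagonal (fun i => Complex.zero_le_real.mpr (by simp [le_abs_self]))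
    simpa [Matrix.star_eq_conjTranspose] using hdiag.mul_mul_conjTranspose_same Q
  have hTpD : (R + D).PosSemidef := by
    have hRD : R + D = Q * diagonal (fun i => ((|mu i| + mu i : ℝ) : ℂ)) * star Q := by
      rw [hRdef]
      conv_lhs => rw [hDspec]
      rw [← Matrix.add_mul, ← Matrix.mul_add, diagonal_add]
      congr 2
      funext i
      push_cast
      rfl
    rw [hRD]
    have hdiag : (diagonal (fun i => ((|mu i| + mu i : ℝ) : ℂ))).PosSemidef :=
      PosSemidef.diagonal (fun i => Complex.zero_le_real.mpr (by linarith [neg_abs_le (mu i)]))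
    simpa [Matrix.star_eq_conjTranspose] using hdiag.mul_mul_conjTranspose_same Q
  -- entrywise facts in the eigenbasis of M
  have hkey3 : diagonal (RCLike.ofReal ∘ lam) * (c A + c B) + (c A + c B) * diagonal (RCLike.ofReal ∘ lam)
      = c D + c D := by
    rw [← hMd, ← hcadd]; exact hkey2
  have hEntry : ∀ i, (c D) i i = (lam i : ℂ) * ((c A) i i + (c B) i i) := by
    intro i
    have h := congrFun (congrFun hkey3 i) i
    simp only [Matrix.add_apply, Matrix.diagonal_mul, Matrix.mul_diagonal,
      Function.comp_apply] at h
    have h2 : (RCLike.ofReal (lam i) : ℂ) = ((lam i : ℝ) : ℂ) := rfl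
    rw [h2] at h
    linear_combination -h / 2
  have hlamEntry : ∀ i, ((lam i : ℝ) : ℂ) = (c A) i i - (c B) i i := by
    intro i
    have h : c M = c A - c B := by rw [hMdef, hcsub]
    have h2 := congrFun (congrFun (hMd.symm.trans h) i) i
    simpa [Matrix.sub_apply, diagonal_apply_eq] using h2
  -- the central per-index inequality
  have hRe : ∀ i, lam i * lam i ≤ ((c R) i i).re := by
    intro i
    have ha := psd_diag_nonneg (hcPSD hApsd) i
    have hb := psd_diag_nonneg (hcPSD hBpsd) i
    obtain ⟨hare, haim⟩ := Complex.nonneg_iff.mp ha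
    obtain ⟨hbre, hbim⟩ := Complex.nonneg_iff.mp hb
    have hlami : lam i = ((c A) i i).re - ((c B) i i).re := by
      have := congr_arg Complex.re (hlamEntry i)
      simpa using this
    have hEre : ((c D) i i).re = lam i * (((c A) i i).re + ((c B) i i).re) := by
      rw [hEntry i]
      simp [Complex.mul_re, Complex.add_re, Complex.add_im, ← haim, ← hbim]
    have h1 := psd_diag_nonneg (hcPSD hTmD) i
    have h2 := psd_diag_nonneg (hcPSD hTpD) i
    have h1' : ((c D) i i).re ≤ ((c R) i i).re := by
      have h1b : (0:ℂ) ≤ (c R - c D) i i := by rw [← hcsub]; exact h1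
      have h1c := (Complex.nonneg_iff.mp h1b).1
      simp only [Matrix.sub_apply, Complex.sub_re] at h1c
      linarith
    have h2' : 0 ≤ ((c R) i i).re + ((c D) i i).re := by
      have h2b : (0:ℂ) ≤ (c R + c D) i i := by rw [← hcadd]; exact h2
      have h2c := (Complex.nonneg_iff.mp h2b).1
      simp only [Matrix.add_apply, Complex.add_re] at h2c
      linarith
    rw [hEre] at h1' h2'
    rcases le_total (((c B) i i).re) (((c A) i i).re) with hxy | hxy
    · nlinarith [mul_nonneg (sub_nonneg.mpr hxy) hbre]
    · nlinarith [mul_nonneg (sub_nonneg.mpr hxy) hare]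
  -- assemble
  have hre1 : ((Mᴴ * M).trace).re = ∑ i, lam i * lam i := by
    rw [hLHS, Complex.re_sum]
    exact Finset.sum_congr rfl fun i _ => by
      rw [← Complex.ofReal_mul]; exact Complex.ofReal_re _
  have hre2 : traceNorm D = ∑ i, ((c R) i i).re := by
    simp only [traceNorm]
    rw [hT, ← hctr R]
    simp [Matrix.trace, Matrix.diag, Complex.re_sum]
  rw [hre1, hre2]
  exact Finset.sum_le_sum fun i _ => hRe i
end

section
/- Distinguishing implies state-specific unitary reconstruction: suppose that for every pair of orthogonal unit vectors ψ, φ ∈ H_code there exists a projector Π_B on H_B with ⟨ψ|V†Π_B V|ψ⟩ ≥ 1 - ε₃ and ⟨φ|V†Π_B V|φ⟩ ≤ ε₃. Then for a fixed unit vector ψ₀ and any unitary U_code on H_code, there exists a unitary U_B on H_B with ‖V U_code ψ₀ - U_B V ψ₀‖ ≤ 2√(ε₃). -/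
set_option linter.unusedSectionVars false
set_option linter.unusedVariables false
set_option maxHeartbeats 1000000

open Matrix Kronecker

/-- The Hilbert space norm of a vector in `ℂ^n`. -/
noncomputable def vecNorm {n : Type*} [Fintype n] (ψ : n → ℂ) : ℝ :=
  Real.sqrt (∑ i, Complex.normSq (ψ i))

section Helpers

variable {n m : Type*} [Fintype n] [Fintype m]

lemma dot_star_self (x : n → ℂ) : star x ⬝ᵥ x = ((∑ i, Complex.normSq (x i) : ℝ) : ℂ) := by
  simp [dotProduct, Complex.normSq_eq_conj_mul_self]

lemma vecNorm_eq (x : n → ℂ) : vecNorm x = Real.sqrt ((star x ⬝ᵥ x).re) := by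
  rw [dot_star_self]; simp [vecNorm]

lemma dot_self_re_nonneg (x : n → ℂ) : 0 ≤ (star x ⬝ᵥ x).re := by
  rw [dot_star_self]; simp
  exact Finset.sum_nonneg fun i _ => Complex.normSq_nonneg _

lemma vecNorm_one_dot {x : n → ℂ} (hx : vecNorm x = 1) : star x ⬝ᵥ x = 1 := by
  rw [dot_star_self]
  have : (∑ i, Complex.normSq (x i)) = 1 := by
    have h := hx
    unfold vecNorm at h
    nlinarith [Real.sq_sqrt (Finset.sum_nonneg fun i (_ : i ∈ Finset.univ) => Complex.normSq_nonneg (x i)), Real.sqrt_nonneg (∑ i, Complex.normSq (x i))]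
  rw [this]; norm_num

lemma dot_self_eq_zero {x : n → ℂ} (hx : star x ⬝ᵥ x = 0) : x = 0 := by
  rw [dot_star_self] at hx
  have h : (∑ i, Complex.normSq (x i)) = 0 := by exact_mod_cast hx
  funext i
  have := (Finset.sum_eq_zero_iff_of_nonneg (fun i _ => Complex.normSq_nonneg (x i))).1 h i (Finset.mem_univ i)
  simpa [Complex.normSq_eq_zero] using this

lemma conj_dot (x y : n → ℂ) : star (star x ⬝ᵥ y) = star y ⬝ᵥ x := by
  simp [dotProduct, star_sum, mul_comm]

lemma dot_mulVec_adjoint (A : Matrix m n ℂ) (x : m → ℂ) (y : n → ℂ) :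
    star x ⬝ᵥ A.mulVec y = star (Aᴴ.mulVec x) ⬝ᵥ y := by
  rw [Matrix.star_mulVec, Matrix.dotProduct_mulVec, Matrix.conjTranspose_conjTranspose]

lemma conj_form {c' : Type*} [Fintype c'] (V : Matrix m c' ℂ) (A : Matrix m m ℂ)
    (v w : c' → ℂ) :
    star (V.mulVec v) ⬝ᵥ A.mulVec (V.mulVec w) = star v ⬝ᵥ (Vᴴ * A * V).mulVec w := by
  rw [Matrix.star_mulVec, Matrix.mulVec_mulVec, Matrix.dotProduct_mulVec,
    Matrix.vecMul_vecMul, ← Matrix.dotProduct_mulVec, Matrix.mul_assoc]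

lemma iso_dot {c' : Type*} [Fintype c'] [DecidableEq c'] [DecidableEq m] {V : Matrix m c' ℂ} (hV : Vᴴ * V = 1)
    (x y : c' → ℂ) : star (V.mulVec x) ⬝ᵥ V.mulVec y = star x ⬝ᵥ y := by
  have := conj_form V 1 x y
  simpa [hV] using this

lemma kron_conjT {p : Type*} [Fintype p] (A : Matrix n n ℂ) (B : Matrix p p ℂ) :
    (A ⊗ₖ B)ᴴ = Aᴴ ⊗ₖ Bᴴ := by
  ext ⟨i, j⟩ ⟨k, l⟩
  simp [Matrix.conjTranspose_apply, Matrix.kroneckerMap_apply]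

lemma sub_kron {p : Type*} (A B : Matrix n n ℂ) (C : Matrix p p ℂ) :
    (A - B) ⊗ₖ C = A ⊗ₖ C - B ⊗ₖ C := by
  ext ⟨i, j⟩ ⟨k, l⟩
  simp [Matrix.kroneckerMap_apply, sub_mul]

end Helpers

/-- Distinguishing implies state-specific unitary reconstruction: if for every pair of
orthogonal unit vectors `ψ, φ` in the code space there is a projector `Π_B` on `H_B` with
`⟨ψ|V†Π_B V|ψ⟩ ≥ 1 - ε₃` and `⟨φ|V†Π_B V|φ⟩ ≤ ε₃`, then for any unit vector `ψ₀` and any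
unitary `U_code` there is a unitary `U_B` on `H_B` with
`‖V U_code ψ₀ - U_B V ψ₀‖ ≤ 2√ε₃`. -/
theorem distinguishing_implies_state_specific_reconstruction
    {c nb nb' : ℕ}
    (V : Matrix (Fin nb × Fin nb') (Fin c) ℂ) (hV : Vᴴ * V = 1)
    (ε₃ : ℝ) (hε₃ : 0 ≤ ε₃)
    (hdist : ∀ ψ φ : Fin c → ℂ, vecNorm ψ = 1 → vecNorm φ = 1 → star ψ ⬝ᵥ φ = 0 →
      ∃ Proj : Matrix (Fin nb) (Fin nb) ℂ, Proj.IsHermitian ∧ Proj * Proj = Proj ∧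
        1 - ε₃ ≤
          (star ψ ⬝ᵥ (Vᴴ * (Proj ⊗ₖ (1 : Matrix (Fin nb') (Fin nb') ℂ)) * V).mulVec ψ).re ∧
        (star φ ⬝ᵥ (Vᴴ * (Proj ⊗ₖ (1 : Matrix (Fin nb') (Fin nb') ℂ)) * V).mulVec φ).re ≤ ε₃)
    (ψ₀ : Fin c → ℂ) (hψ₀ : vecNorm ψ₀ = 1)
    (U : Matrix (Fin c) (Fin c) ℂ) (hU : U ∈ unitary (Matrix (Fin c) (Fin c) ℂ)) :
    ∃ UB : Matrix (Fin nb) (Fin nb) ℂ, UB ∈ unitary (Matrix (Fin nb) (Fin nb) ℂ) ∧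
      vecNorm (V.mulVec (U.mulVec ψ₀) -
          ((UB ⊗ₖ (1 : Matrix (Fin nb') (Fin nb') ℂ)) * V).mulVec ψ₀)
        ≤ 2 * Real.sqrt ε₃ := by
  have hsqrt_nonneg : (0:ℝ) ≤ 2 * Real.sqrt ε₃ := by positivity
  have hsq2 : Real.sqrt (4 * ε₃) = 2 * Real.sqrt ε₃ := by
    rw [show (4:ℝ) * ε₃ = 2^2 * ε₃ by ring, Real.sqrt_mul (by positivity) ε₃,
      Real.sqrt_sq (by norm_num)]
  set u : Fin c → ℂ := U.mulVec ψ₀ with hu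
  set z : ℂ := star ψ₀ ⬝ᵥ u with hz
  set t : ℝ := ‖z‖ with ht
  set a : ℂ := if z = 0 then 1 else (starRingEnd ℂ) z / (t : ℂ) with ha
  have ht0 : 0 ≤ t := norm_nonneg z
  have hza : a * z = (t : ℂ) := by
    by_cases h0 : z = 0
    · simp [ha, h0, ht]
    · rw [ha, if_neg h0, ht]
      have h1 : (starRingEnd ℂ) z * z = ((‖z‖ : ℝ)^2 : ℝ) := by
        rw [mul_comm, Complex.mul_conj, Complex.normSq_eq_norm_sq]
      have h2 : (‖z‖ : ℂ) ≠ 0 := by simpa using h0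
      rw [div_mul_eq_mul_div, h1]
      push_cast
      field_simp
  have haa : (starRingEnd ℂ) a * a = 1 := by
    by_cases h0 : z = 0
    · simp [ha, h0]
    · rw [ha, if_neg h0, ht, mul_comm, Complex.mul_conj, Complex.normSq_div,
        Complex.normSq_conj, Complex.normSq_ofReal, Complex.normSq_eq_norm_sq]
      have h2 : ‖z‖ ≠ 0 := norm_ne_zero_iff.mpr h0
      norm_cast
      rw [sq]
      field_simp
  have haa' : a * (starRingEnd ℂ) a = 1 := by rw [mul_comm]; exact haa
  have hconj : (starRingEnd ℂ) a * (starRingEnd ℂ) z = (t : ℂ) := by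
    rw [← _root_.map_mul, hza, Complex.conj_ofReal]
  have s00 : star ψ₀ ⬝ᵥ ψ₀ = 1 := vecNorm_one_dot hψ₀
  have hUU : Uᴴ * U = 1 := by
    have h := hU.1
    rwa [Matrix.star_eq_conjTranspose] at h
  have suu : star u ⬝ᵥ u = 1 := by
    rw [hu, iso_dot hUU, s00]
  have su0 : star u ⬝ᵥ ψ₀ = (starRingEnd ℂ) z := by
    rw [← conj_dot ψ₀ u, ← hz]
    rfl
  set p : Fin c → ℂ := ψ₀ + a • u with hp
  set m : Fin c → ℂ := ψ₀ - a • u with hm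
  have hpm : star p ⬝ᵥ m = 0 := by
    rw [hp, hm]
    simp only [star_add, star_smul, add_dotProduct, dotProduct_sub,
      smul_dotProduct, dotProduct_smul, smul_eq_mul, s00, suu, su0,
      Complex.star_def, ← hz]
    linear_combination -hza + hconj - haa
  have hpp : star p ⬝ᵥ p = ((2 + 2*t : ℝ) : ℂ) := by
    rw [hp]
    simp only [star_add, star_smul, add_dotProduct, dotProduct_add,
      smul_dotProduct, dotProduct_smul, smul_eq_mul, s00, suu, su0,
      Complex.star_def, ← hz]
    push_cast
    linear_combination hza + hconj + haa
  have hmm2 : star m ⬝ᵥ m = ((2 - 2*t : ℝ) : ℂ) := by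
    rw [hm]
    simp only [star_sub, star_smul, sub_dotProduct, dotProduct_sub,
      smul_dotProduct, dotProduct_smul, smul_eq_mul, s00, suu, su0,
      Complex.star_def, ← hz]
    push_cast
    linear_combination -hza - hconj + haa
  -- a helper to build unitaries of the form conj a • Q
  have hsmul_unitary : ∀ (Q : Matrix (Fin nb) (Fin nb) ℂ), Qᴴ = Q → Q * Q = 1 →
      ((starRingEnd ℂ) a • Q) ∈ unitary (Matrix (Fin nb) (Fin nb) ℂ) := by
    intro Q hQh hQQ
    rw [Unitary.mem_iff]
    constructor
    · rw [Matrix.star_eq_conjTranspose, Matrix.conjTranspose_smul, hQh, Matrix.smul_mul,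
        Matrix.mul_smul, smul_smul, hQQ]
      have hst : star ((starRingEnd ℂ) a) * (starRingEnd ℂ) a = 1 := by
        rw [Complex.star_def, Complex.conj_conj]
        exact haa'
      rw [hst, one_smul]
    · rw [Matrix.star_eq_conjTranspose, Matrix.conjTranspose_smul, hQh, Matrix.smul_mul,
        Matrix.mul_smul, smul_smul, hQQ]
      have hst : (starRingEnd ℂ) a * star ((starRingEnd ℂ) a) = 1 := by
        rw [Complex.star_def, Complex.conj_conj]
        exact haa
      rw [hst, one_smul]
  by_cases hm0 : m = 0
  · -- degenerate case : u is proportional to ψ₀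
    have h1 : a • u = ψ₀ := by
      have := hm0
      rw [hm] at this
      exact (sub_eq_zero.mp this).symm
    have hu_eq : u = (starRingEnd ℂ) a • ψ₀ := by
      calc u = ((starRingEnd ℂ) a * a) • u := by rw [haa, one_smul]
        _ = (starRingEnd ℂ) a • (a • u) := by rw [smul_smul]
        _ = (starRingEnd ℂ) a • ψ₀ := by rw [h1]
    refine ⟨(starRingEnd ℂ) a • (1 : Matrix (Fin nb) (Fin nb) ℂ),
      hsmul_unitary 1 Matrix.conjTranspose_one (mul_one 1), ?_⟩
    have hk1 : ((starRingEnd ℂ) a • (1 : Matrix (Fin nb) (Fin nb) ℂ)) ⊗ₖ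
        (1 : Matrix (Fin nb') (Fin nb') ℂ) =
        (starRingEnd ℂ) a • (1 : Matrix (Fin nb × Fin nb') (Fin nb × Fin nb') ℂ) := by
      rw [Matrix.smul_kronecker, Matrix.one_kronecker_one]
    rw [hk1, Matrix.smul_mul, Matrix.one_mul, Matrix.smul_mulVec, hu_eq,
      Matrix.mulVec_smul, sub_self]
    have h0 : vecNorm (0 : (Fin nb × Fin nb') → ℂ) = 0 := by simp [vecNorm]
    rw [h0]
    exact hsqrt_nonneg
  · -- generic case
    have hre_mm : (star m ⬝ᵥ m).re = 2 - 2*t := by rw [hmm2, Complex.ofReal_re]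
    have hmm_nonneg : 0 ≤ 2 - 2*t := by
      have h := dot_self_re_nonneg m
      rwa [hre_mm] at h
    have hmm_pos : 0 < 2 - 2*t := by
      rcases eq_or_lt_of_le hmm_nonneg with h | h
      · exfalso
        exact hm0 (dot_self_eq_zero (by rw [hmm2, ← h]; simp))
      · exact h
    have hpp_pos : 0 < 2 + 2*t := by linarith
    set np := Real.sqrt (2+2*t) with hnp_def
    set nm := Real.sqrt (2-2*t) with hnm_def
    have hnp2 : np*np = 2+2*t := Real.mul_self_sqrt hpp_pos.le
    have hnm2 : nm*nm = 2-2*t := Real.mul_self_sqrt hmm_pos.le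
    have hnp_pos : 0 < np := Real.sqrt_pos.mpr hpp_pos
    have hnm_pos : 0 < nm := Real.sqrt_pos.mpr hmm_pos
    have hnp0 : np ≠ 0 := ne_of_gt hnp_pos
    have hnm0 : nm ≠ 0 := ne_of_gt hnm_pos
    have hvp : vecNorm (((np⁻¹ : ℝ) : ℂ) • p) = 1 := by
      rw [vecNorm_eq]
      have e : star (((np⁻¹ : ℝ) : ℂ) • p) ⬝ᵥ (((np⁻¹ : ℝ) : ℂ) • p) =
          ((np⁻¹ * np⁻¹ * (2+2*t) : ℝ) : ℂ) := by
        simp only [star_smul, smul_dotProduct, dotProduct_smul, smul_eq_mul,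
          Complex.star_def, Complex.conj_ofReal, hpp]
        push_cast
        ring
      rw [e]
      have h9 : np⁻¹ * np⁻¹ * (2+2*t) = 1 := by
        field_simp
        linarith [hnp2]
      rw [h9]
      simp
    have hvm : vecNorm (((nm⁻¹ : ℝ) : ℂ) • m) = 1 := by
      rw [vecNorm_eq]
      have e : star (((nm⁻¹ : ℝ) : ℂ) • m) ⬝ᵥ (((nm⁻¹ : ℝ) : ℂ) • m) =
          ((nm⁻¹ * nm⁻¹ * (2-2*t) : ℝ) : ℂ) := by
        simp only [star_smul, smul_dotProduct, dotProduct_smul, smul_eq_mul,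
          Complex.star_def, Complex.conj_ofReal, hmm2]
        push_cast
        ring
      rw [e]
      have h9 : nm⁻¹ * nm⁻¹ * (2-2*t) = 1 := by
        field_simp
        linarith [hnm2]
      rw [h9]
      simp
    have orth : star (((np⁻¹ : ℝ) : ℂ) • p) ⬝ᵥ (((nm⁻¹ : ℝ) : ℂ) • m) = 0 := by
      simp only [star_smul, smul_dotProduct, dotProduct_smul, smul_eq_mul, hpm,
        mul_zero]
    obtain ⟨Pi, hherm, hidem, h1, h2⟩ :=
      hdist (((np⁻¹ : ℝ) : ℂ) • p) (((nm⁻¹ : ℝ) : ℂ) • m) hvp hvm orth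
    set P : Matrix (Fin nb × Fin nb') (Fin nb × Fin nb') ℂ :=
      Pi ⊗ₖ (1 : Matrix (Fin nb') (Fin nb') ℂ) with hPdef
    have hPh : Pᴴ = P := by
      rw [hPdef, kron_conjT, hherm.eq, Matrix.conjTranspose_one]
    have hPP : P * P = P := by
      rw [hPdef, ← Matrix.mul_kronecker_mul, hidem, one_mul]
    set Q : Matrix (Fin nb) (Fin nb) ℂ := (2:ℂ) • Pi - 1 with hQdef
    have hQh : Qᴴ = Q := by
      rw [hQdef]
      simp [Matrix.conjTranspose_sub, Matrix.conjTranspose_smul, hherm.eq,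
        Matrix.conjTranspose_one]
    have hQQ : Q * Q = 1 := by
      rw [hQdef]
      simp only [Matrix.sub_mul, Matrix.mul_sub, Matrix.smul_mul, Matrix.mul_smul,
        Matrix.one_mul, Matrix.mul_one, hidem, smul_smul]
      module
    refine ⟨(starRingEnd ℂ) a • Q, hsmul_unitary Q hQh hQQ, ?_⟩
    have hkron : ((starRingEnd ℂ) a • Q) ⊗ₖ (1 : Matrix (Fin nb') (Fin nb') ℂ) =
        (starRingEnd ℂ) a • ((2:ℂ) • P - 1) := by
      rw [hQdef, Matrix.smul_kronecker, sub_kron, Matrix.smul_kronecker,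
        Matrix.one_kronecker_one, ← hPdef]
    set g : (Fin nb × Fin nb') → ℂ := V.mulVec u -
      ((((starRingEnd ℂ) a • Q) ⊗ₖ (1 : Matrix (Fin nb') (Fin nb') ℂ)) * V).mulVec ψ₀
      with hgdef
    have hpush : ∀ (v w : (Fin nb × Fin nb') → ℂ),
        star (P.mulVec v) ⬝ᵥ w = star v ⬝ᵥ (P.mulVec w) := by
      intro v w
      have h := dot_mulVec_adjoint P v w
      rw [hPh] at h
      exact h.symm
    have hPidem : ∀ v, P.mulVec (P.mulVec v) = P.mulVec v := by
      intro v
      rw [Matrix.mulVec_mulVec, hPP]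
    have hag : a • g = V.mulVec p - P.mulVec (V.mulVec p) - P.mulVec (V.mulVec m) := by
      rw [hgdef, hkron, Matrix.smul_mul, Matrix.smul_mulVec, smul_sub, smul_smul,
        haa', one_smul, hp, hm]
      simp only [← Matrix.mulVec_mulVec, Matrix.sub_mulVec, Matrix.smul_mulVec,
        Matrix.one_mulVec, Matrix.mulVec_add, Matrix.mulVec_sub, Matrix.mulVec_smul]
      module
    have hgg : star (a • g) ⬝ᵥ (a • g) = star g ⬝ᵥ g := by
      simp only [star_smul, smul_dotProduct, dotProduct_smul, smul_eq_mul,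
        Complex.star_def]
      linear_combination (star g ⬝ᵥ g) * haa
    have hexp : star (a • g) ⬝ᵥ (a • g) =
        star p ⬝ᵥ p - star p ⬝ᵥ ((Vᴴ * P * V).mulVec p) + star m ⬝ᵥ ((Vᴴ * P * V).mulVec m) := by
      rw [hag]
      simp only [star_sub, sub_dotProduct, dotProduct_sub, hpush, hPidem]
      rw [iso_dot hV p p, conj_form V P p p, conj_form V P p m, conj_form V P m p,
        conj_form V P m m]
      ring
    -- rescale the hypotheses from normalized vectors
    have hsc : ∀ (cc : ℝ) (v : Fin c → ℂ),
        star ((cc:ℂ) • v) ⬝ᵥ ((Vᴴ * P * V).mulVec ((cc:ℂ) • v)) =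
          ((cc*cc : ℝ):ℂ) * (star v ⬝ᵥ ((Vᴴ * P * V).mulVec v)) := by
      intro cc v
      simp only [star_smul, smul_dotProduct, dotProduct_smul,
        Matrix.mulVec_smul, smul_eq_mul, Complex.star_def, Complex.conj_ofReal]
      push_cast
      ring
    rw [hsc] at h1 h2
    rw [Complex.re_ofReal_mul] at h1 h2
    have hα : (2+2*t) * (1 - ε₃) ≤ (star p ⬝ᵥ ((Vᴴ * P * V).mulVec p)).re := by
      have hinv : np⁻¹ * np⁻¹ = (2+2*t)⁻¹ := by rw [← hnp2, mul_inv]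
      rw [hinv, ← div_eq_inv_mul] at h1
      have h3 := (le_div_iff₀ hpp_pos).mp h1
      linarith
    have hβ : (star m ⬝ᵥ ((Vᴴ * P * V).mulVec m)).re ≤ (2-2*t) * ε₃ := by
      have hinv : nm⁻¹ * nm⁻¹ = (2-2*t)⁻¹ := by rw [← hnm2, mul_inv]
      rw [hinv, ← div_eq_inv_mul] at h2
      have h3 := (div_le_iff₀ hmm_pos).mp h2
      linarith
    have hre : (star g ⬝ᵥ g).re ≤ 4 * ε₃ := by
      rw [← hgg, hexp, hpp]
      simp only [Complex.add_re, Complex.sub_re, Complex.ofReal_re]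
      linarith [hα, hβ]
    calc vecNorm g = Real.sqrt ((star g ⬝ᵥ g).re) := vecNorm_eq g
      _ ≤ Real.sqrt (4 * ε₃) := Real.sqrt_le_sqrt hre
      _ = 2 * Real.sqrt ε₃ := hsq2
end
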